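/- The second and third branch regions of the Hashin–Shtrikman correction are disjoint: for all v ∈ [0,1] and t ∈ [0,1] with s = √(1 − t²), it is impossible that simultaneously v·Δκ·t > d₂(v)·s and v·Δμ·s > d₃(v)·t. -/
import Mathlib


open Real

/-- The square root `s = √(1 - t²)`. -/
noncomputable def sHS (t : ℝ) : ℝ := Real.sqrt (1 - t ^ 2)

/-- The Hashin–Shtrikman correction term `q(t; v)` for two well-ordered isotropic
plane-stress phases with bulk moduli `κm < κp` and shear moduli `μm < μp`. -/
noncomputable def qHS (κm κp μm μp t v : ℝ) : ℝ :=
  if v * (κp - κm) * t ≤ (κp + μp - (κp - κm) * v) * sHS t ∧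
     v * (μp - μm) * sHS t ≤ (κp + μp - (μp - μm) * v) * t then
    v * (1 - v) * ((κp - κm) * t - (μp - μm) * sHS t) ^ 2 /
      (κp + μp - ((κp - κm) + (μp - μm)) * v)
  else if (κp + μp - (κp - κm) * v) * sHS t < v * (κp - κm) * t then
    (1 - v) * (v * (κp - κm) ^ 2 * t ^ 2 / (κp + μp - (κp - κm) * v)
      - (μp - μm) * (sHS t) ^ 2)
  else
    (1 - v) * (v * (μp - μm) ^ 2 * (sHS t) ^ 2 / (κp + μp - (μp - μm) * v)
      - (κp - κm) * t ^ 2)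

/-- The Hashin–Shtrikman upper-bound function `f^HS(t; v)`:
the Voigt energy minus the correction `q(t; v)`. -/
noncomputable def fHS (κm κp μm μp t v : ℝ) : ℝ :=
  (κm + v * (κp - κm)) * t ^ 2 + (μm + v * (μp - μm)) * (1 - t ^ 2)
    - qHS κm κp μm μp t v

/-- The second and third branch regions of the Hashin–Shtrikman correction are
disjoint: it is impossible that simultaneously `v·Δκ·t > d₂(v)·s` and
`v·Δμ·s > d₃(v)·t`. -/
theorem hs_branches_disjoint
    (κm κp μm μp : ℝ) (hκm : 0 < κm) (hκ : κm < κp) (hμm : 0 < μm) (hμ : μm < μp)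
    (v : ℝ) (hv : v ∈ Set.Icc (0 : ℝ) 1) (t : ℝ) (ht : t ∈ Set.Icc (0 : ℝ) 1)
    (s : ℝ) (hs : s = Real.sqrt (1 - t ^ 2)) :
    ¬ (v * (κp - κm) * t > (κp + μp - (κp - κm) * v) * s ∧
       v * (μp - μm) * s > (κp + μp - (μp - μm) * v) * t) := by
  rintro ⟨h1, h2⟩
  obtain ⟨hv0, hv1⟩ := hv
  obtain ⟨ht0, ht1⟩ := ht
  have hs0 : 0 ≤ s := hs ▸ Real.sqrt_nonneg _
  have hd2 : 0 < κp + μp - (κp - κm) * v := by nlinarith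
  have hd3 : 0 < κp + μp - (μp - μm) * v := by nlinarith
  have key := mul_lt_mul'' h1 h2 (mul_nonneg hd2.le hs0) (mul_nonneg hd3.le ht0)
  have ha : v * (μp - μm) ≤ κp + μp - (κp - κm) * v := by nlinarith
  have hb : v * (κp - κm) ≤ κp + μp - (μp - μm) * v := by nlinarith
  have hp : v * (μp - μm) * (v * (κp - κm)) ≤
      (κp + μp - (κp - κm) * v) * (κp + μp - (μp - μm) * v) :=
    mul_le_mul ha hb (mul_nonneg hv0 (by linarith)) hd2.le
  have := mul_le_mul_of_nonneg_left hp (mul_nonneg hs0 ht0)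
  nlinarith [this, key]
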